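/- arXiv:2403.17019 — 2 statements merged into one kernel-verified Lean document; each statement's English description precedes it below -/
import Mathlib

section
/- If a two-variable quaternionic slice regular polynomial P vanishes at a point (a,b) with ab = ba, then for every Q ∈ ℍ[q₁,q₂] the *-product P * Q also vanishes at (a,b). -/
/-- Two-variable quaternionic polynomials `Σ q₁ⁿ q₂ᵐ a_{n,m}`, encoded as polynomials in `q₁`
whose coefficients are polynomials in `q₂`; polynomial multiplication is exactly the
double-convolution `*`-product. -/
abbrev Poly2 : Type := Polynomial (Polynomial (Quaternion ℝ))

/-- Evaluation of a one-variable quaternionic polynomial `Σ qⁿ aₙ` at `q`. -/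
noncomputable def qeval (f : Polynomial (Quaternion ℝ)) (q : Quaternion ℝ) : Quaternion ℝ :=
  f.sum fun n a => q ^ n * a

/-- Evaluation of `P = Σ q₁ⁿ q₂ᵐ a_{n,m}` at a point `(a,b)`:  `Σ aⁿ bᵐ a_{n,m}`. -/
noncomputable def evalPair (P : Poly2) (a b : Quaternion ℝ) : Quaternion ℝ :=
  P.sum fun n p => a ^ n * qeval p b

/-- Regular conjugate of a one-variable quaternionic polynomial. -/
noncomputable def qconj (f : Polynomial (Quaternion ℝ)) : Polynomial (Quaternion ℝ) :=
  ∑ n ∈ f.support, Polynomial.monomial n (star (f.coeff n))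

/-- Regular conjugate `P^c` of a two-variable quaternionic polynomial. -/
noncomputable def conj2 (P : Poly2) : Poly2 :=
  ∑ n ∈ P.support, Polynomial.monomial n (qconj (P.coeff n))

/-- Symmetrization `P^s = P * P^c` of a two-variable quaternionic polynomial. -/
noncomputable def sym2 (P : Poly2) : Poly2 := P * conj2 P

lemma qeval_add (p q : Polynomial (Quaternion ℝ)) (b) :
    qeval (p + q) b = qeval p b + qeval q b := by
  unfold qeval
  apply Polynomial.sum_add_index <;> intros <;> simp [mul_add]

lemma qeval_monomial (n : ℕ) (c : Quaternion ℝ) (b) :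
    qeval (Polynomial.monomial n c) b = b ^ n * c := by
  unfold qeval
  rw [Polynomial.sum_monomial_index]
  simp

lemma evalPair_add (P Q : Polynomial (Polynomial (Quaternion ℝ))) (a b) :
    evalPair (P + Q) a b = evalPair P a b + evalPair Q a b := by
  unfold evalPair
  apply Polynomial.sum_add_index
  · intro i; simp [qeval]
  · intro i x y; rw [qeval_add, mul_add]

lemma evalPair_monomial (n : ℕ) (p : Polynomial (Quaternion ℝ)) (a b) :
    evalPair (Polynomial.monomial n p) a b = a ^ n * qeval p b := by
  unfold evalPair
  rw [Polynomial.sum_monomial_index]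
  simp [qeval]

lemma qeval_mul_monomial (p : Polynomial (Quaternion ℝ)) (m : ℕ) (c : Quaternion ℝ) (b) :
    qeval (p * Polynomial.monomial m c) b = b ^ m * qeval p b * c := by
  induction p using Polynomial.induction_on' with
  | add p q hp hq => rw [add_mul, qeval_add, hp, hq, qeval_add, mul_add, add_mul]
  | monomial l d =>
      rw [Polynomial.monomial_mul_monomial, qeval_monomial, qeval_monomial,
        add_comm, pow_add]
      simp [mul_assoc]

lemma key (a b : Quaternion ℝ) (hab : a * b = b * a) (n m : ℕ) (c : Quaternion ℝ)
    (P : Polynomial (Polynomial (Quaternion ℝ))) :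
    evalPair (P * Polynomial.monomial n (Polynomial.monomial m c)) a b
      = a ^ n * (b ^ m * (evalPair P a b * c)) := by
  have h : Commute a b := hab
  induction P using Polynomial.induction_on' with
  | add p q hp hq =>
      rw [add_mul, evalPair_add, hp, hq, evalPair_add, add_mul, mul_add, mul_add]
  | monomial k p =>
      rw [Polynomial.monomial_mul_monomial, evalPair_monomial, evalPair_monomial,
        qeval_mul_monomial, pow_add]
      have hc : a ^ k * b ^ m = b ^ m * a ^ k := (h.pow_pow k m)
      calc a ^ k * a ^ n * (b ^ m * qeval p b * c)
          = a ^ n * (a ^ k * b ^ m * (qeval p b * c)) := by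
            rw [← pow_add, add_comm k n, pow_add]; simp [mul_assoc]
        _ = a ^ n * (b ^ m * (a ^ k * qeval p b * c)) := by rw [hc]; simp [mul_assoc]


theorem zero_at_commuting_pair_preserved_by_right_mul (P Q : Poly2) (a b : Quaternion ℝ)
    (hab : a * b = b * a) (hP : evalPair P a b = 0) :
    evalPair (P * Q) a b = 0 := by
  induction Q using Polynomial.induction_on' with
  | add q r hq hr => rw [mul_add, evalPair_add, hq, hr, add_zero]
  | monomial n q =>
      induction q using Polynomial.induction_on' with
      | add u v hu hv =>
          rw [map_add, mul_add, evalPair_add, hu, hv, add_zero]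
      | monomial m c => rw [key a b hab, hP, zero_mul, mul_zero, mul_zero]
end

section
/- Let P, Q be two-variable quaternionic slice regular polynomials with deg_{q₁}P = n, deg_{q₁}Q = m. Suppose there exist nonzero H, K ∈ ℍ[q₁,q₂] with deg_{q₁}H < m and deg_{q₁}K < n such that P*H + Q*K = 0. Then the symmetrized polynomials satisfy P^s * H^s = Q^s * K^s, where P^s, Q^s have real coefficients, deg_{q₁}H^s = 2 deg_{q₁}H < deg_{q₁}Q^s, and deg_{q₁}K^s = 2 deg_{q₁}K < deg_{q₁}P^s. -/
open Polynomial

lemma sum_antidiagonal_swap {M : Type*} [AddCommMonoid M] (n : ℕ) (f : ℕ → ℕ → M) :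
    ∑ p ∈ Finset.HasAntidiagonal.antidiagonal n, f p.1 p.2 = ∑ p ∈ Finset.HasAntidiagonal.antidiagonal n, f p.2 p.1 := by
  conv_rhs => rw [← Finset.HasAntidiagonal.map_swap_antidiagonal]
  rw [Finset.sum_map]
  simp

lemma qconj_coeff (f : Polynomial (Quaternion ℝ)) (n : ℕ) :
    (qconj f).coeff n = star (f.coeff n) := by
  rw [qconj, finset_sum_coeff]
  simp only [coeff_monomial]
  rw [Finset.sum_ite_eq' f.support n fun k => star (f.coeff k)]
  by_cases h : n ∈ f.support
  · rw [if_pos h]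
  · rw [if_neg h, notMem_support_iff.mp h, star_zero]

lemma conj2_coeff (P : Poly2) (n : ℕ) : (conj2 P).coeff n = qconj (P.coeff n) := by
  rw [conj2, finset_sum_coeff]
  simp only [coeff_monomial]
  rw [Finset.sum_ite_eq' P.support n fun k => qconj (P.coeff k)]
  by_cases h : n ∈ P.support
  · rw [if_pos h]
  · rw [if_neg h, notMem_support_iff.mp h]
    refine Polynomial.ext fun m => ?_
    rw [qconj_coeff]; simp

lemma qconj_sum {ι : Type*} (s : Finset ι) (F : ι → Polynomial (Quaternion ℝ)) :
    qconj (∑ i ∈ s, F i) = ∑ i ∈ s, qconj (F i) := by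
  refine Polynomial.ext fun m => ?_
  rw [qconj_coeff, finset_sum_coeff, finset_sum_coeff, star_sum]
  exact Finset.sum_congr rfl fun i _ => (qconj_coeff (F i) m).symm

lemma qconj_mul (f g : Polynomial (Quaternion ℝ)) :
    qconj (f * g) = qconj g * qconj f := by
  refine Polynomial.ext fun n => ?_
  rw [qconj_coeff, coeff_mul, star_sum, coeff_mul]
  simp only [qconj_coeff, star_mul]
  exact (sum_antidiagonal_swap n fun a b => star (g.coeff a) * star (f.coeff b)).symm

lemma conj2_mul (P Q : Poly2) : conj2 (P * Q) = conj2 Q * conj2 P := by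
  refine Polynomial.ext fun n => ?_
  rw [conj2_coeff, coeff_mul, qconj_sum, coeff_mul]
  simp only [conj2_coeff, qconj_mul]
  exact (sum_antidiagonal_swap n fun a b => qconj (Q.coeff a) * qconj (P.coeff b)).symm

lemma qconj_neg (f : Polynomial (Quaternion ℝ)) : qconj (-f) = - qconj f := by
  refine Polynomial.ext fun m => ?_
  rw [qconj_coeff, coeff_neg, coeff_neg, qconj_coeff, star_neg]

lemma conj2_neg (P : Poly2) : conj2 (-P) = - conj2 P := by
  refine Polynomial.ext fun n => ?_
  rw [conj2_coeff, coeff_neg, coeff_neg, conj2_coeff, qconj_neg]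

lemma qconj_eq_zero {f : Polynomial (Quaternion ℝ)} : qconj f = 0 ↔ f = 0 := by
  constructor
  · intro h
    refine Polynomial.ext fun n => ?_
    have := congrArg (fun g => Polynomial.coeff g n) h
    simp only [qconj_coeff, coeff_zero, star_eq_zero] at this
    simp [this]
  · rintro rfl
    refine Polynomial.ext fun n => ?_
    simp [qconj_coeff]

lemma conj2_ne_zero {P : Poly2} (hP : P ≠ 0) : conj2 P ≠ 0 := by
  intro h
  apply hP
  refine Polynomial.ext fun n => ?_
  have := congrArg (fun g => Polynomial.coeff g n) h
  simp only [conj2_coeff, coeff_zero] at this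
  simp [qconj_eq_zero.mp this]

lemma natDegree_conj2 (P : Poly2) : (conj2 P).natDegree = P.natDegree := by
  have key : ∀ n, (conj2 P).coeff n = 0 ↔ P.coeff n = 0 := by
    intro n
    rw [conj2_coeff, qconj_eq_zero]
  apply le_antisymm
  · exact natDegree_le_iff_coeff_eq_zero.mpr fun n hn =>
      (key n).mpr (coeff_eq_zero_of_natDegree_lt hn)
  · exact natDegree_le_iff_coeff_eq_zero.mpr fun n hn =>
      (key n).mp (coeff_eq_zero_of_natDegree_lt hn)

lemma star_coeff_mul_conj (p q : Polynomial (Quaternion ℝ)) (m : ℕ) :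
    star ((p * qconj q).coeff m) = (q * qconj p).coeff m := by
  rw [coeff_mul, coeff_mul, star_sum]
  simp only [qconj_coeff, star_mul, star_star]
  exact (sum_antidiagonal_swap m fun a b => q.coeff a * star (p.coeff b)).symm

lemma sym2_coeff_real (P : Poly2) (n m : ℕ) :
    ∃ r : ℝ, ((sym2 P).coeff n).coeff m = (r : Quaternion ℝ) := by
  have hstar : star (((sym2 P).coeff n).coeff m) = ((sym2 P).coeff n).coeff m := by
    rw [sym2, coeff_mul, finset_sum_coeff, star_sum]
    simp only [conj2_coeff, star_coeff_mul_conj]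
    exact sum_antidiagonal_swap n fun i j => (P.coeff j * qconj (P.coeff i)).coeff m
  exact ⟨_, Quaternion.star_eq_self.mp hstar⟩

lemma commute_of_real (a : Polynomial (Quaternion ℝ))
    (ha : ∀ m, ∃ r : ℝ, a.coeff m = (r : Quaternion ℝ)) (b : Polynomial (Quaternion ℝ)) :
    a * b = b * a := by
  refine Polynomial.ext fun m => ?_
  rw [coeff_mul, coeff_mul, sum_antidiagonal_swap m fun i j => a.coeff i * b.coeff j]
  refine Finset.sum_congr rfl fun p _ => ?_
  obtain ⟨r, hr⟩ := ha p.2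
  rw [hr]
  exact Quaternion.coe_commutes r _

lemma commute2_of_real (A : Poly2)
    (hA : ∀ n m, ∃ r : ℝ, (A.coeff n).coeff m = (r : Quaternion ℝ)) (B : Poly2) :
    A * B = B * A := by
  refine Polynomial.ext fun n => ?_
  rw [coeff_mul, coeff_mul, sum_antidiagonal_swap n fun i j => A.coeff i * B.coeff j]
  exact Finset.sum_congr rfl fun p _ => commute_of_real _ (hA p.2) _

lemma sym2_mul (A B : Poly2) : sym2 (A * B) = sym2 A * sym2 B := by
  unfold sym2
  rw [conj2_mul]
  calc A * B * (conj2 B * conj2 A)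
      = A * (B * conj2 B * conj2 A) := by rw [mul_assoc A, ← mul_assoc B]
    _ = A * (conj2 A * (B * conj2 B)) := by
        rw [commute2_of_real (B * conj2 B) (sym2_coeff_real B) (conj2 A)]
    _ = A * conj2 A * (B * conj2 B) := by rw [mul_assoc]

lemma sym2_neg (A : Poly2) : sym2 (-A) = sym2 A := by
  unfold sym2
  rw [conj2_neg]
  exact neg_mul_neg A (conj2 A)

lemma natDegree_sym2 (P : Poly2) : (sym2 P).natDegree = 2 * P.natDegree := by
  by_cases h : P = 0
  · subst h
    have : conj2 (0 : Poly2) = 0 := by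
      refine Polynomial.ext fun n => ?_
      simp [conj2_coeff, qconj_eq_zero]
    simp [sym2, this]
  · rw [sym2, Polynomial.natDegree_mul h (conj2_ne_zero h), natDegree_conj2, two_mul]

theorem symmetrized_syzygy (P Q H K : Poly2)
    (hH : H ≠ 0) (hK : K ≠ 0)
    (hdH : H.natDegree < Q.natDegree) (hdK : K.natDegree < P.natDegree)
    (hrel : P * H + Q * K = 0) :
    sym2 P * sym2 H = sym2 Q * sym2 K ∧
    (∀ n m : ℕ, ∃ r : ℝ, ((sym2 P).coeff n).coeff m = (r : Quaternion ℝ)) ∧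
    (∀ n m : ℕ, ∃ r : ℝ, ((sym2 Q).coeff n).coeff m = (r : Quaternion ℝ)) ∧
    (sym2 H).natDegree = 2 * H.natDegree ∧
    (sym2 H).natDegree < (sym2 Q).natDegree ∧
    (sym2 K).natDegree = 2 * K.natDegree ∧
    (sym2 K).natDegree < (sym2 P).natDegree := by
  have hmain : sym2 P * sym2 H = sym2 Q * sym2 K := by
    have h1 : P * H = -(Q * K) := eq_neg_of_add_eq_zero_left hrel
    have := congrArg sym2 h1
    rwa [sym2_neg, sym2_mul, sym2_mul] at this
  refine ⟨hmain, sym2_coeff_real P, sym2_coeff_real Q, natDegree_sym2 H, ?_,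
    natDegree_sym2 K, ?_⟩
  · rw [natDegree_sym2, natDegree_sym2]; omega
  · rw [natDegree_sym2, natDegree_sym2]; omega
end
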